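/- For β < 0, q ≥ 2, and all n ≥ 3, the internal energy per particle of the Potts model on cycles satisfies U_{C_n}^q(β) > U_{C_{n+1}}^q(β). -/

import Mathlib

open scoped Classical
open Finset

/-- Number of monochromatic edges of `G` under the coloring `σ`. -/
noncomputable def monoEdges {V : Type} [Fintype V] (G : SimpleGraph V) {q : ℕ}
    (σ : V → Fin q) : ℕ :=
  (G.edgeFinset.filter fun e =>
    Sym2.lift ⟨fun u v => σ u = σ v, fun _ _ => propext eq_comm⟩ e).card

/-- The `q`-color Potts partition function of `G` at inverse temperature `β`. -/
noncomputable def pottsZ {V : Type} [Fintype V] (G : SimpleGraph V) (q : ℕ) (β : ℝ) : ℝ :=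
  ∑ σ : V → Fin q, Real.exp (-β * monoEdges G σ)

/-- The internal energy per particle: expected number of monochromatic
edges per vertex in the Potts model. -/
noncomputable def pottsU {V : Type} [Fintype V] (G : SimpleGraph V) (q : ℕ) (β : ℝ) : ℝ :=
  (Fintype.card V : ℝ)⁻¹ *
    (∑ σ : V → Fin q, (monoEdges G σ : ℝ) * Real.exp (-β * monoEdges G σ)) / pottsZ G q β

/-- The number of proper `q`-colorings of `G`. -/
noncomputable def properCount {V : Type} [Fintype V] (G : SimpleGraph V) (q : ℕ) : ℕ :=
  (Finset.univ.filter fun σ : V → Fin q => monoEdges G σ = 0).card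


noncomputable section PottsAux

variable (q : ℕ)

/-- cyclic monochromatic count -/
def cW {n : ℕ} (σ : Fin (n + 1) → Fin q) : ℕ := ∑ i : Fin (n + 1), if σ i = σ (i + 1) then 1 else 0

/-- path monochromatic count -/
def pW {n : ℕ} (σ : Fin (n + 1) → Fin q) : ℕ :=
  ∑ i : Fin n, if σ i.castSucc = σ i.succ then 1 else 0

lemma cW_eq {n : ℕ} (σ : Fin (n + 1) → Fin q) :
    cW q σ = pW q σ + (if σ (Fin.last n) = σ 0 then 1 else 0) := by
  rw [cW, Fin.sum_univ_castSucc]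
  congr 1
  · apply Finset.sum_congr rfl
    intro i _
    rw [Fin.coeSucc_eq_succ]
  · rw [Fin.last_add_one]

lemma pW_snoc {n : ℕ} (σ : Fin (n + 1) → Fin q) (a : Fin q) :
    pW q (Fin.snoc σ a) = pW q σ + (if σ (Fin.last n) = a then 1 else 0) := by
  rw [pW, Fin.sum_univ_castSucc]
  congr 1
  · apply Finset.sum_congr rfl
    intro i _
    rw [Fin.succ_castSucc, Fin.snoc_castSucc, Fin.snoc_castSucc]
  · rw [Fin.succ_last, Fin.snoc_castSucc, Fin.snoc_last]

lemma snoc_zero' {n : ℕ} (σ : Fin (n + 1) → Fin q) (a : Fin q) :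
    (Fin.snoc σ a : Fin (n + 2) → Fin q) 0 = σ 0 := by
  have : (0 : Fin (n + 2)) = Fin.castSucc 0 := rfl
  rw [this, Fin.snoc_castSucc]

end PottsAux
noncomputable section PottsAux2

variable (q : ℕ)

lemma sum_snoc_decomp {n : ℕ} (F : (Fin (n + 2) → Fin q) → ℝ) :
    ∑ τ : Fin (n + 2) → Fin q, F τ
      = ∑ σ : Fin (n + 1) → Fin q, ∑ a : Fin q, F (Fin.snoc σ a) := by
  rw [← Equiv.sum_comp (Fin.snocEquiv (fun _ => Fin q)) F, Fintype.sum_prod_type]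
  rw [Finset.sum_comm]
  rfl

def Spath (y : ℝ) (n : ℕ) : ℝ :=
  ∑ σ : Fin (n + 1) → Fin q, if σ (Fin.last n) = σ 0 then y ^ pW q σ else 0

def Dpath (y : ℝ) (n : ℕ) : ℝ :=
  ∑ σ : Fin (n + 1) → Fin q, if σ (Fin.last n) = σ 0 then 0 else y ^ pW q σ

lemma Spath_zero (y : ℝ) : Spath q y 0 = q := by
  rw [Spath]
  simp [pW, Fin.last]

lemma Dpath_zero (y : ℝ) : Dpath q y 0 = 0 := by
  rw [Dpath]
  apply Finset.sum_eq_zero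
  intro σ _
  simp [Fin.last]

end PottsAux2
section PottsAux3

variable (q : ℕ)

lemma Spath_succ (y : ℝ) (n : ℕ) :
    Spath q y (n + 1) = y * Spath q y n + Dpath q y n := by
  rw [Spath, sum_snoc_decomp]
  have h : ∀ σ : Fin (n + 1) → Fin q,
      (∑ a : Fin q, if (Fin.snoc σ a : Fin (n + 2) → Fin q) (Fin.last (n + 1))
          = (Fin.snoc σ a : Fin (n + 2) → Fin q) 0 then y ^ pW q (Fin.snoc σ a) else 0)
      = (if σ (Fin.last n) = σ 0 then y * y ^ pW q σ else y ^ pW q σ) := by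
    intro σ
    simp only [Fin.snoc_last, snoc_zero', pW_snoc]
    rw [Finset.sum_eq_single (σ 0)]
    · by_cases h : σ (Fin.last n) = σ 0 <;> simp [h, pow_succ] <;> ring
    · intro b _ hb; simp [hb]
    · simp
  rw [Finset.sum_congr rfl (fun σ _ => h σ), Spath, Dpath, mul_sum, ← Finset.sum_add_distrib]
  refine Finset.sum_congr rfl fun σ _ => ?_
  by_cases h : σ (Fin.last n) = σ 0 <;> simp [h]

lemma Dpath_succ (y : ℝ) (n : ℕ) :
    Dpath q y (n + 1) = ((q : ℝ) - 1) * Spath q y n + (y + (q : ℝ) - 2) * Dpath q y n := by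
  rw [Dpath, sum_snoc_decomp]
  have h : ∀ σ : Fin (n + 1) → Fin q,
      (∑ a : Fin q, if (Fin.snoc σ a : Fin (n + 2) → Fin q) (Fin.last (n + 1))
          = (Fin.snoc σ a : Fin (n + 2) → Fin q) 0 then 0 else y ^ pW q (Fin.snoc σ a))
      = y ^ pW q σ * ((q : ℝ) + y - 1 - (if σ (Fin.last n) = σ 0 then y else 1)) := by
    intro σ
    simp only [Fin.snoc_last, snoc_zero', pW_snoc]
    have hterm : ∀ a : Fin q,
        (if a = σ 0 then (0 : ℝ) else y ^ (pW q σ + if σ (Fin.last n) = a then 1 else 0))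
        = y ^ pW q σ * ((if σ (Fin.last n) = a then y else 1)
            - (if a = σ 0 then (if σ (Fin.last n) = σ 0 then y else 1) else 0)) := by
      intro a
      by_cases h1 : a = σ 0
      · rw [h1]; simp
      · by_cases h2 : σ (Fin.last n) = a <;> simp [h1, h2, pow_succ] <;> ring
    rw [Finset.sum_congr rfl (fun a _ => hterm a), ← Finset.mul_sum]
    congr 1
    rw [Finset.sum_sub_distrib]
    have h1 : (∑ a : Fin q, if σ (Fin.last n) = a then y else 1) = (q : ℝ) + y - 1 := by
      have : ∀ a : Fin q, (if σ (Fin.last n) = a then y else 1)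
          = 1 + (if σ (Fin.last n) = a then y - 1 else 0) := by
        intro a; by_cases h2 : σ (Fin.last n) = a <;> simp [h2]
      rw [Finset.sum_congr rfl (fun a _ => this a), Finset.sum_add_distrib,
        Finset.sum_ite_eq]
      simp [Finset.card_univ]
      ring
    have h2 : (∑ a : Fin q, if a = σ 0 then (if σ (Fin.last n) = σ 0 then y else 1) else 0)
        = (if σ (Fin.last n) = σ 0 then y else 1) := by
      rw [Finset.sum_ite_eq']; simp
    rw [h1, h2]
  rw [Finset.sum_congr rfl (fun σ _ => h σ), Spath, Dpath, mul_sum, mul_sum,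
    ← Finset.sum_add_distrib]
  refine Finset.sum_congr rfl fun σ _ => ?_
  by_cases h : σ (Fin.last n) = σ 0 <;> simp [h] <;> ring

end PottsAux3
section PottsAux4

variable (q : ℕ)

lemma SD_closed (y : ℝ) (n : ℕ) :
    Spath q y n = (y + (q : ℝ) - 1) ^ n + ((q : ℝ) - 1) * (y - 1) ^ n ∧
    Dpath q y n = ((q : ℝ) - 1) * ((y + (q : ℝ) - 1) ^ n - (y - 1) ^ n) := by
  induction n with
  | zero => simp [Spath_zero, Dpath_zero]
  | succ n ih =>
    rw [Spath_succ, Dpath_succ, ih.1, ih.2]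
    constructor <;> ring

end PottsAux4
section PottsAux5

variable (q : ℕ)

def Zc (y : ℝ) (n : ℕ) : ℝ := ∑ σ : Fin (n + 1) → Fin q, y ^ cW q σ

def Wc (y : ℝ) (n : ℕ) : ℝ := ∑ σ : Fin (n + 1) → Fin q, (cW q σ : ℝ) * y ^ cW q σ

lemma Zc_closed (y : ℝ) (n : ℕ) :
    Zc q y n = (y + (q : ℝ) - 1) ^ (n + 1) + ((q : ℝ) - 1) * (y - 1) ^ (n + 1) := by
  have h : Zc q y n = y * Spath q y n + Dpath q y n := by
    rw [Zc, Spath, Dpath, mul_sum, ← Finset.sum_add_distrib]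
    refine Finset.sum_congr rfl fun σ _ => ?_
    rw [cW_eq]
    by_cases h : σ (Fin.last n) = σ 0 <;> simp [h, pow_succ] <;> ring
  rw [h, (SD_closed q y n).1, (SD_closed q y n).2]
  ring

lemma Wc_closed (y : ℝ) (n : ℕ) :
    Wc q y n = (n + 1 : ℝ) * y *
      ((y + (q : ℝ) - 1) ^ n + ((q : ℝ) - 1) * (y - 1) ^ n) := by
  set c : ℝ := (q : ℝ) - 1 with hc
  have hd1 : HasDerivAt (fun x : ℝ => Zc q x n)
      (∑ σ : Fin (n + 1) → Fin q, (cW q σ : ℝ) * y ^ (cW q σ - 1)) y := by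
    apply HasDerivAt.fun_sum
    intro σ _
    exact hasDerivAt_pow (cW q σ) y
  have hfun : (fun x : ℝ => Zc q x n)
      = fun x : ℝ => (x + c) ^ (n + 1) + c * (x - 1) ^ (n + 1) :=
    funext fun x => (Zc_closed q x n).trans (by rw [hc]; ring_nf)
  rw [hfun] at hd1
  have h1 : HasDerivAt (fun x : ℝ => (x + c) ^ (n + 1)) ((n + 1 : ℝ) * (y + c) ^ n) y := by
    simpa using ((hasDerivAt_id y).add_const c).fun_pow (n + 1)
  have h2 : HasDerivAt (fun x : ℝ => (x - 1) ^ (n + 1)) ((n + 1 : ℝ) * (y - 1) ^ n) y := by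
    simpa using ((hasDerivAt_id y).sub_const 1).fun_pow (n + 1)
  have hd2 := h1.add (h2.const_mul c)
  have hkey := hd1.unique hd2
  have hterm : ∀ σ : Fin (n + 1) → Fin q,
      (cW q σ : ℝ) * y ^ cW q σ = y * ((cW q σ : ℝ) * y ^ (cW q σ - 1)) := by
    intro σ
    cases h : cW q σ with
    | zero => simp
    | succ k => rw [pow_succ]; push_cast; ring
  rw [Wc, Finset.sum_congr rfl (fun σ _ => hterm σ), ← Finset.mul_sum, hkey]
  have : y + c = y + (q : ℝ) - 1 := by rw [hc]; ring
  rw [this]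
  ring

end PottsAux5
section PottsGraph

variable (q : ℕ)

lemma finval_one (k : ℕ) : ((1 : Fin (k + 3)) : ℕ) = 1 := by
  have : (1 : Fin (k + 3)).val = 1 % (k + 3) := rfl
  rw [this, Nat.mod_eq_of_lt (by omega)]

lemma cycle_inj (k : ℕ) : Function.Injective (fun i : Fin (k + 3) => s(i, i + 1)) := by
  intro i j h
  simp only [Sym2.eq, Sym2.rel_iff', Prod.mk.injEq, Prod.swap_prod_mk] at h
  rcases h with ⟨h1, _⟩ | ⟨h1, h2⟩
  · exact h1
  · exfalso
    have hv1 : (i : ℕ) = ((j : ℕ) + 1) % (k + 3) := by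
      rw [h1, Fin.val_add, finval_one]
    have hv2 : (j : ℕ) = ((i : ℕ) + 1) % (k + 3) := by
      rw [← h2, Fin.val_add, finval_one]
    have hi := i.isLt
    have hj := j.isLt
    rcases Nat.lt_or_ge ((j : ℕ) + 1) (k + 3) with hcase | hcase
    · rw [Nat.mod_eq_of_lt hcase] at hv1
      rcases Nat.lt_or_ge ((i : ℕ) + 1) (k + 3) with hcase2 | hcase2
      · rw [Nat.mod_eq_of_lt hcase2] at hv2; omega
      · have hE : (i : ℕ) + 1 = k + 3 := by omega
        rw [hE, Nat.mod_self] at hv2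
        omega
    · have hE : (j : ℕ) + 1 = k + 3 := by omega
      rw [hE, Nat.mod_self] at hv1
      rw [Nat.mod_eq_of_lt (by omega)] at hv2
      omega

lemma cycle_edgeFinset (k : ℕ) [inst : Fintype ((SimpleGraph.cycleGraph (k + 3)).edgeSet)] :
    @SimpleGraph.edgeFinset _ _ inst
      = Finset.univ.image (fun i : Fin (k + 3) => s(i, i + 1)) := by
  ext e
  refine e.ind fun u v => ?_
  simp only [SimpleGraph.mem_edgeFinset, SimpleGraph.mem_edgeSet, Finset.mem_image,
    Finset.mem_univ, true_and, SimpleGraph.cycleGraph_adj']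
  constructor
  · rintro (h | h)
    · refine ⟨v, ?_⟩
      have h' : u - v = 1 := Fin.ext (by rw [h, finval_one])
      have huv : u = v + 1 := by rw [← h']; abel
      rw [← huv, Sym2.eq_swap]
    · refine ⟨u, ?_⟩
      have h' : v - u = 1 := Fin.ext (by rw [h, finval_one])
      have huv : v = u + 1 := by rw [← h']; abel
      rw [← huv]
  · rintro ⟨i, hi⟩
    rcases Sym2.eq_iff.mp hi with ⟨rfl, rfl⟩ | ⟨rfl, rfl⟩
    · right
      have h' : i + 1 - i = 1 := by abel
      rw [h', finval_one]
    · left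
      have h' : i + 1 - i = 1 := by abel
      rw [h', finval_one]

lemma monoEdges_cycle (k : ℕ) (σ : Fin (k + 3) → Fin q) :
    monoEdges (SimpleGraph.cycleGraph (k + 3)) σ = cW q σ := by
  rw [monoEdges, cycle_edgeFinset, Finset.filter_image,
    Finset.card_image_of_injective _ (cycle_inj k), cW, Finset.card_filter]
  apply Finset.sum_congr rfl
  intro i _
  simp
  split_ifs <;> simp_all

end PottsGraph
section PottsFinal

variable (q : ℕ)

lemma sum_univ_inst {α M : Type*} [AddCommMonoid M] (i1 i2 : Fintype α) (F : α → M) :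
    @Finset.sum α M _ (@Finset.univ α i1) F = @Finset.sum α M _ (@Finset.univ α i2) F := by
  cases Subsingleton.elim i1 i2; rfl

lemma expc (β : ℝ) (c : ℕ) : Real.exp (-β * c) = Real.exp (-β) ^ c := by
  rw [mul_comm, Real.exp_nat_mul]

lemma pottsZ_cycle (k : ℕ) (β : ℝ) :
    pottsZ (SimpleGraph.cycleGraph (k + 3)) q β = Zc q (Real.exp (-β)) (k + 2) := by
  rw [pottsZ, Zc, sum_univ_inst _ inferInstance]
  refine Finset.sum_congr rfl fun σ _ => ?_
  rw [monoEdges_cycle, expc]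

lemma pottsU_cycle (k : ℕ) (β : ℝ) :
    pottsU (SimpleGraph.cycleGraph (k + 3)) q β
      = Real.exp (-β) * ((Real.exp (-β) + (q : ℝ) - 1) ^ (k + 2)
            + ((q : ℝ) - 1) * (Real.exp (-β) - 1) ^ (k + 2))
        / ((Real.exp (-β) + (q : ℝ) - 1) ^ (k + 2 + 1)
            + ((q : ℝ) - 1) * (Real.exp (-β) - 1) ^ (k + 2 + 1)) := by
  have hnum : (∑ σ : Fin (k + 3) → Fin q,
        (monoEdges (SimpleGraph.cycleGraph (k + 3)) σ : ℝ)
          * Real.exp (-β * monoEdges (SimpleGraph.cycleGraph (k + 3)) σ))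
      = Wc q (Real.exp (-β)) (k + 2) := by
    rw [Wc]
    refine Finset.sum_congr rfl fun σ _ => ?_
    rw [monoEdges_cycle, expc]
  rw [pottsU, sum_univ_inst _ inferInstance, hnum, pottsZ_cycle, Wc_closed, Zc_closed,
    Fintype.card_fin]
  congr 1
  have h3 : ((k : ℝ) + 3) ≠ 0 := by positivity
  push_cast
  field_simp
  ring

lemma potts_key (k : ℕ) (hq : 2 ≤ q) (β : ℝ) (hβ : β < 0) :
    pottsU (SimpleGraph.cycleGraph (k + 1 + 3)) q β
      < pottsU (SimpleGraph.cycleGraph (k + 3)) q β := by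
  rw [pottsU_cycle, pottsU_cycle]
  set y : ℝ := Real.exp (-β) with hy
  have hy1 : 1 < y := by
    rw [hy, show (1 : ℝ) = Real.exp 0 from (Real.exp_zero).symm]
    exact Real.exp_lt_exp.mpr (by linarith)
  have hq2 : (2 : ℝ) ≤ (q : ℝ) := by exact_mod_cast hq
  set a : ℝ := y + (q : ℝ) - 1 with ha
  set b : ℝ := y - 1 with hb
  set Q : ℝ := (q : ℝ) - 1 with hQdef
  have hb0 : 0 < b := by rw [hb]; linarith
  have ha0 : 0 < a := by rw [ha]; linarith
  have hQ0 : 0 < Q := by rw [hQdef]; linarith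
  have hab : b < a := by rw [ha, hb]; linarith
  have hy0 : 0 < y := by linarith
  set A : ℝ := a ^ (k + 2) with hA
  set B : ℝ := b ^ (k + 2) with hB
  have hA0 : 0 < A := pow_pos ha0 _
  have hB0 : 0 < B := pow_pos hb0 _
  have e1 : a ^ (k + 2 + 1) = A * a := pow_succ a (k + 2)
  have e2 : b ^ (k + 2 + 1) = B * b := pow_succ b (k + 2)
  have e3 : a ^ (k + 1 + 2) = A * a := by
    rw [show k + 1 + 2 = k + 2 + 1 from by ring, pow_succ, hA]
  have e4 : b ^ (k + 1 + 2) = B * b := by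
    rw [show k + 1 + 2 = k + 2 + 1 from by ring, pow_succ, hB]
  have e5 : a ^ (k + 1 + 2 + 1) = A * a * a := by
    rw [pow_succ, e3]
  have e6 : b ^ (k + 1 + 2 + 1) = B * b * b := by
    rw [pow_succ, e4]
  rw [e5, e6, e1, e2]
  have hZ1 : 0 < A + Q * B := by positivity
  have hZ2 : 0 < A * a + Q * (B * b) := by positivity
  have hZ3 : 0 < A * a * a + Q * (B * b * b) := by positivity
  rw [div_lt_div_iff₀ hZ3 hZ2]
  have hkey : 0 < y * (Q * (A * B * (a - b) ^ 2)) :=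
    mul_pos hy0 (mul_pos hQ0 (mul_pos (mul_pos hA0 hB0) (pow_pos (by linarith) 2)))
  have hring : y * (A + Q * B) * (A * a * a + Q * (B * b * b))
      - y * (A * a + Q * (B * b)) * (A * a + Q * (B * b))
      = y * (Q * (A * B * (a - b) ^ 2)) := by ring
  linarith [hkey, hring]

end PottsFinal

theorem potts_energy_cycle_ferro_decreasing (n : ℕ) (hn : 3 ≤ n)
    (q : ℕ) (hq : 2 ≤ q) (β : ℝ) (hβ : β < 0) :
    pottsU (SimpleGraph.cycleGraph (n + 1)) q β < pottsU (SimpleGraph.cycleGraph n) q β := by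
  obtain ⟨k, rfl⟩ : ∃ k, n = k + 3 := ⟨n - 3, by omega⟩
  exact potts_key q k hq β hβ
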